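/- Let ε > 0, let l be a natural number, and let G be a simple graph on a finite vertex type V with edge weights w : Sym2 V → ℝ such that every edge weight lies in the set {(1+ε)^i : 0 ≤ i ≤ l}. For each 0 ≤ i ≤ l, let a_i denote the cardinality of V minus the number of connected components of G_{≤(1+ε)^i}. Then the total weight of any minimum spanning forest of G equals a_0 + Σ_{i=1}^{l} (a_i − a_{i−1})·(1+ε)^i. -/

import Mathlib

/-- `F` is a spanning forest of `H`: a spanning subgraph (edges a subset of those of `H`)
that is acyclic and has the same reachability relation as `H`. -/
def IsSpanningForest {V : Type*} (H F : SimpleGraph V) : Prop :=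
  F ≤ H ∧ F.IsAcyclic ∧ ∀ u v : V, F.Reachable u v ↔ H.Reachable u v

/-- The total weight of the edges of a graph. -/
noncomputable def totalWeight {V : Type*} (w : Sym2 V → ℝ) (F : SimpleGraph V) : ℝ :=
  ∑ᶠ e ∈ F.edgeSet, w e

/-- `F` is a minimum spanning forest of `H` with respect to the weights `w`. -/
def IsMSF {V : Type*} (w : Sym2 V → ℝ) (H F : SimpleGraph V) : Prop :=
  IsSpanningForest H F ∧
    ∀ F' : SimpleGraph V, IsSpanningForest H F' → totalWeight w F ≤ totalWeight w F'

/-- The spanning subgraph `G_{≤ t}` of `G` consisting of the edges of `G` of weight at most `t`. -/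
def leSub {V : Type*} (w : Sym2 V → ℝ) (G : SimpleGraph V) (t : ℝ) : SimpleGraph V :=
  SimpleGraph.fromEdgeSet {e ∈ G.edgeSet | w e ≤ t}

section AuxLemmas

open SimpleGraph


variable {V : Type*}

/-- Reachability in a graph with one extra edge. -/
lemma reachable_sup_edge {H : SimpleGraph V} {x y : V} {u v : V}
    (h : (H ⊔ edge x y).Reachable u v) :
    H.Reachable u v ∨ (H.Reachable u x ∧ H.Reachable y v) ∨
      (H.Reachable u y ∧ H.Reachable x v) := by
  obtain ⟨p⟩ := h
  induction p with
  | nil => exact Or.inl (Reachable.refl _)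
  | @cons a b c hab p ih =>
    rw [sup_adj, edge_adj] at hab
    rcases hab with hab | ⟨(⟨rfl, rfl⟩ | ⟨rfl, rfl⟩), hne⟩
    · rcases ih with h1 | ⟨h1, h2⟩ | ⟨h1, h2⟩
      · exact Or.inl ((Adj.reachable hab).trans h1)
      · exact Or.inr (Or.inl ⟨(Adj.reachable hab).trans h1, h2⟩)
      · exact Or.inr (Or.inr ⟨(Adj.reachable hab).trans h1, h2⟩)
    · rcases ih with h1 | ⟨h1, h2⟩ | ⟨h1, h2⟩
      · exact Or.inr (Or.inl ⟨Reachable.refl _, h1⟩)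
      · exact Or.inl (h1.symm.trans h2)
      · exact Or.inl h2
    · rcases ih with h1 | ⟨h1, h2⟩ | ⟨h1, h2⟩
      · exact Or.inr (Or.inr ⟨Reachable.refl _, h1⟩)
      · exact Or.inl h2
      · exact Or.inl (h1.symm.trans h2)

lemma IsAcyclic.mono' {F H : SimpleGraph V} (hFH : F ≤ H) (h : H.IsAcyclic) : F.IsAcyclic :=
  fun _ c hc => h (c.mapLe hFH) (hc.mapLe _)

lemma sup_edge_deleteEdges_self {H : SimpleGraph V} {x y : V} (hnadj : ¬H.Adj x y) :
    (H ⊔ edge x y).deleteEdges {s(x, y)} = H := by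
  ext a b
  simp only [deleteEdges_adj, sup_adj, edge_adj, Set.mem_singleton_iff, Sym2.eq_iff]
  constructor
  · rintro ⟨hab | ⟨(⟨rfl, rfl⟩ | ⟨rfl, rfl⟩), hne⟩, h2⟩
    · exact hab
    · exact absurd (Or.inl ⟨rfl, rfl⟩) h2
    · exact absurd (Or.inr ⟨rfl, rfl⟩) h2
  · intro hab
    refine ⟨Or.inl hab, ?_⟩
    rintro (⟨rfl, rfl⟩ | ⟨rfl, rfl⟩)
    · exact hnadj hab
    · exact hnadj hab.symm

lemma deleteEdges_sup_edge {H : SimpleGraph V} {x y a b : V} (h : s(a, b) ≠ s(x, y)) :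
    (H ⊔ edge x y).deleteEdges {s(a, b)} = (H.deleteEdges {s(a, b)}) ⊔ edge x y := by
  ext u v
  simp only [deleteEdges_adj, sup_adj, edge_adj, Set.mem_singleton_iff]
  constructor
  · rintro ⟨hadj | he, h2⟩
    · exact Or.inl ⟨hadj, h2⟩
    · exact Or.inr he
  · rintro (⟨hadj, h2⟩ | he)
    · exact ⟨Or.inl hadj, h2⟩
    · refine ⟨Or.inr he, ?_⟩
      intro h2
      apply h
      rw [← h2]
      rcases he.1 with ⟨rfl, rfl⟩ | ⟨rfl, rfl⟩
      · rfl
      · exact Sym2.eq_swap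

lemma not_adj_of_not_reachable {H : SimpleGraph V} {x y : V} (h : ¬H.Reachable x y) :
    ¬H.Adj x y := fun ha => h ha.reachable

/-- Adding an edge between two non-reachable vertices preserves acyclicity. -/
lemma IsAcyclic.sup_edge {H : SimpleGraph V} {x y : V} (hH : H.IsAcyclic) (hne : x ≠ y)
    (hnr : ¬H.Reachable x y) : (H ⊔ edge x y).IsAcyclic := by
  rw [isAcyclic_iff_forall_adj_isBridge]
  intro a b hab
  rw [sup_adj, edge_adj] at hab
  have hnadj : ¬H.Adj x y := not_adj_of_not_reachable hnr
  rcases hab with hab | ⟨(⟨rfl, rfl⟩ | ⟨rfl, rfl⟩), hne'⟩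
  · have hbr : ¬(H.deleteEdges {s(a, b)}).Reachable a b :=
      ((isAcyclic_iff_forall_adj_isBridge.1 hH) hab)
    have hsne : s(a, b) ≠ s(x, y) := by
      intro hcontra
      rw [Sym2.eq_iff] at hcontra
      rcases hcontra with ⟨rfl, rfl⟩ | ⟨rfl, rfl⟩
      · exact hnadj hab
      · exact hnadj hab.symm
    show ¬((H ⊔ edge x y).deleteEdges {s(a, b)}).Reachable a b
    rw [deleteEdges_sup_edge hsne]
    intro hr
    rcases reachable_sup_edge hr with h1 | ⟨h1, h2⟩ | ⟨h1, h2⟩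
    · exact hbr h1
    · exact hnr (((h1.mono (deleteEdges_le _)).symm.trans hab.reachable).trans
        (h2.mono (deleteEdges_le _)).symm)
    · exact hnr (((h2.mono (deleteEdges_le _)).trans hab.symm.reachable).trans
        (h1.mono (deleteEdges_le _)))
  · show ¬((H ⊔ edge a b).deleteEdges {s(a, b)}).Reachable a b
    rw [sup_edge_deleteEdges_self hnadj]
    exact hnr
  · show ¬((H ⊔ edge b a).deleteEdges {s(a, b)}).Reachable a b
    rw [show s(a, b) = s(b, a) from Sym2.eq_swap, sup_edge_deleteEdges_self
      (fun hadj => hnadj hadj)]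
    exact fun hr => hnr hr.symm

lemma card_cc_sup_edge [Fintype V] {H : SimpleGraph V} {x y : V} (hne : x ≠ y)
    (hnr : ¬H.Reachable x y) :
    Nat.card H.ConnectedComponent = Nat.card (H ⊔ edge x y).ConnectedComponent + 1 := by
  classical
  haveI : Fintype H.ConnectedComponent := Fintype.ofFinite _
  haveI : Fintype (H ⊔ edge x y).ConnectedComponent := Fintype.ofFinite _
  set K := H ⊔ edge x y with hK
  have hle : H ≤ K := le_sup_left
  set ψ : H.ConnectedComponent → K.ConnectedComponent :=
    ConnectedComponent.map (SimpleGraph.Hom.ofLE hle) with hψ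
  have hψmk : ∀ v : V, ψ (H.connectedComponentMk v) = K.connectedComponentMk v := fun v => rfl
  have hadjxy : K.Adj x y := (sup_adj _ _ _ _).2 (Or.inr (by rw [edge_adj]; exact ⟨Or.inl ⟨rfl, rfl⟩, hne⟩))
  have key : ∀ u v : V, ψ (H.connectedComponentMk u) = K.connectedComponentMk v →
      (H.Reachable u v ∨ (H.Reachable u x ∧ H.Reachable y v) ∨
        (H.Reachable u y ∧ H.Reachable x v)) := by
    intro u v h
    rw [hψmk, ConnectedComponent.eq] at h
    exact reachable_sup_edge h
  rw [Nat.card_eq_fintype_card, Nat.card_eq_fintype_card, ← Finset.card_univ, ← Finset.card_univ]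
  rw [Finset.card_eq_sum_card_fiberwise (f := ψ) (t := Finset.univ) (fun d _ => Finset.mem_univ _)]
  have hfiber : ∀ c : K.ConnectedComponent,
      (Finset.univ.filter (fun d => ψ d = c)).card =
        if c = K.connectedComponentMk x then 2 else 1 := by
    intro c
    induction c using ConnectedComponent.ind with
    | _ v =>
    by_cases hc : K.connectedComponentMk v = K.connectedComponentMk x
    · rw [hc, if_pos rfl]
      have hfe : (Finset.univ.filter (fun d => ψ d = K.connectedComponentMk x)) =
          {H.connectedComponentMk x, H.connectedComponentMk y} := by
        ext d
        induction d using ConnectedComponent.ind with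
        | _ u =>
        simp only [Finset.mem_filter, Finset.mem_univ, true_and, Finset.mem_insert,
          Finset.mem_singleton, ConnectedComponent.eq]
        constructor
        · intro h
          rcases key u x h with h1 | ⟨h1, h2⟩ | ⟨h1, h2⟩
          · exact Or.inl h1
          · exact absurd h2.symm hnr
          · exact Or.inr h1
        · rintro (h | h)
          · rw [hψmk, ConnectedComponent.eq]
            exact h.mono hle
          · rw [hψmk, ConnectedComponent.eq]
            exact (h.mono hle).trans hadjxy.symm.reachable
      rw [hfe, Finset.card_insert_of_notMem (by
        simp only [Finset.mem_singleton, ConnectedComponent.eq]; exact hnr),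
        Finset.card_singleton]
    · rw [if_neg hc]
      rw [Finset.card_eq_one]
      refine ⟨H.connectedComponentMk v, ?_⟩
      ext d
      induction d using ConnectedComponent.ind with
      | _ u =>
      simp only [Finset.mem_filter, Finset.mem_univ, true_and, Finset.mem_singleton,
        ConnectedComponent.eq]
      constructor
      · intro h
        rcases key u v h with h1 | ⟨h1, h2⟩ | ⟨h1, h2⟩
        · exact h1
        · exact absurd (ConnectedComponent.sound ((h2.mono hle).symm.trans
            hadjxy.symm.reachable)) hc
        · exact absurd (ConnectedComponent.sound (h2.mono hle).symm) hc
      · intro h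
        rw [hψmk, ConnectedComponent.eq]
        exact h.mono hle
  rw [Finset.sum_congr rfl (fun c _ => hfiber c)]
  have h2 : ∀ c : K.ConnectedComponent,
      (if c = K.connectedComponentMk x then (2 : ℕ) else 1) =
        (if c = K.connectedComponentMk x then 1 else 0) + 1 := by
    intro c; split <;> rfl
  rw [Finset.sum_congr rfl (fun c _ => h2 c), Finset.sum_add_distrib,
    Finset.sum_ite_eq' Finset.univ (K.connectedComponentMk x) (fun _ => (1 : ℕ)),
    if_pos (Finset.mem_univ _), Finset.sum_const, smul_eq_mul, mul_one]
  omega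

lemma card_cc_bot [Fintype V] : Nat.card (⊥ : SimpleGraph V).ConnectedComponent = Fintype.card V := by
  rw [← Nat.card_eq_fintype_card]
  refine (Nat.card_eq_of_bijective (⊥ : SimpleGraph V).connectedComponentMk ⟨?_, ?_⟩).symm
  · intro u v h
    exact reachable_bot.1 (ConnectedComponent.exact h)
  · intro c
    exact c.exists_rep

lemma forest_card_aux [Fintype V] : ∀ n : ℕ, ∀ F : SimpleGraph V, F.IsAcyclic →
    F.edgeSet.ncard = n → n + Nat.card F.ConnectedComponent = Fintype.card V := by
  intro n
  induction n with
  | zero =>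
    intro F hF hn
    have : F.edgeSet = ∅ := (Set.ncard_eq_zero (Set.toFinite _)).1 hn
    rw [SimpleGraph.edgeSet_eq_empty] at this
    rw [this, card_cc_bot, Nat.zero_add]
  | succ n ih =>
    intro F hF hn
    have hne0 : F.edgeSet.Nonempty := Set.nonempty_of_ncard_ne_zero (by omega)
    obtain ⟨e, he⟩ := hne0
    induction e using Sym2.ind with
    | _ x y =>
    have hxy : F.Adj x y := he
    set F' := F.deleteEdges {s(x, y)} with hF'
    have hF'le : F' ≤ F := SimpleGraph.deleteEdges_le _
    have hF'ac : F'.IsAcyclic := IsAcyclic.mono' hF'le hF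
    have hES : F'.edgeSet = F.edgeSet \ {s(x, y)} := SimpleGraph.edgeSet_deleteEdges _
    have hcard : F'.edgeSet.ncard = n := by
      rw [hES]
      have := Set.ncard_diff_singleton_add_one he (Set.toFinite _)
      omega
    have hsup : F = F' ⊔ SimpleGraph.edge x y := by
      ext a b
      simp only [sup_adj, hF', SimpleGraph.deleteEdges_adj, Set.mem_singleton_iff,
        SimpleGraph.edge_adj]
      constructor
      · intro h
        by_cases heq : s(a, b) = s(x, y)
        · rw [Sym2.eq_iff] at heq
          exact Or.inr ⟨heq, h.ne⟩
        · exact Or.inl ⟨h, heq⟩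
      · rintro (⟨h, _⟩ | ⟨(⟨rfl, rfl⟩ | ⟨rfl, rfl⟩), _⟩)
        · exact h
        · exact hxy
        · exact hxy.symm
    have hnr : ¬F'.Reachable x y := ((isAcyclic_iff_forall_adj_isBridge.1 hF) hxy)
    have hcc : Nat.card F'.ConnectedComponent =
        Nat.card (F' ⊔ SimpleGraph.edge x y).ConnectedComponent + 1 :=
      card_cc_sup_edge hxy.ne hnr
    rw [← hsup] at hcc
    have := ih F' hF'ac hcard
    omega

/-- Edge count of an acyclic graph in terms of the number of connected components. -/
lemma forest_card [Fintype V] {F : SimpleGraph V} (hF : F.IsAcyclic) :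
    F.edgeSet.ncard + Nat.card F.ConnectedComponent = Fintype.card V :=
  forest_card_aux _ F hF rfl

lemma card_cc_congr {F H : SimpleGraph V}
    (h : ∀ u v : V, F.Reachable u v ↔ H.Reachable u v) :
    Nat.card F.ConnectedComponent = Nat.card H.ConnectedComponent :=
  Nat.card_congr (Quot.congrRight h)

lemma card_cc_le_of_le [Finite V] {F H : SimpleGraph V} (h : F ≤ H) :
    Nat.card H.ConnectedComponent ≤ Nat.card F.ConnectedComponent := by
  refine Nat.card_le_card_of_surjective
    (ConnectedComponent.map (SimpleGraph.Hom.ofLE h)) ?_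
  intro c
  induction c using ConnectedComponent.ind with
  | _ v => exact ⟨F.connectedComponentMk v, rfl⟩

lemma card_cc_le_card [Finite V] (F : SimpleGraph V) :
    Nat.card F.ConnectedComponent ≤ Nat.card V :=
  Nat.card_le_card_of_surjective F.connectedComponentMk (fun c => c.exists_rep)

/-- Any acyclic subgraph of `H` extends to a spanning forest of `H`. -/
lemma exists_spanning_forest_ge [Fintype V] {H F₀ : SimpleGraph V} (h0 : F₀ ≤ H)
    (hac : F₀.IsAcyclic) : ∃ F : SimpleGraph V, F₀ ≤ F ∧ IsSpanningForest H F := by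
  classical
  set S : Set (SimpleGraph V) := {F | F₀ ≤ F ∧ F ≤ H ∧ F.IsAcyclic} with hS
  obtain ⟨F, hFS, hFmax⟩ := Set.Finite.exists_maximalFor (fun F => F.edgeSet.ncard) S
    (Set.toFinite S) ⟨F₀, le_refl _, h0, hac⟩
  obtain ⟨hF0, hFH, hFac⟩ := hFS
  have hadj : ∀ u v : V, H.Adj u v → F.Reachable u v := by
    intro u v huv
    by_contra hnr
    have hne : u ≠ v := huv.ne
    have hmem : F ⊔ edge u v ∈ S := by
      refine ⟨hF0.trans le_sup_left, ?_, IsAcyclic.sup_edge hFac hne hnr⟩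
      intro a b hab
      rcases (sup_adj _ _ _ _).1 hab with h | h
      · exact hFH h
      · rw [edge_adj] at h
        rcases h.1 with ⟨rfl, rfl⟩ | ⟨rfl, rfl⟩
        · exact huv
        · exact huv.symm
    have hcard : (F ⊔ edge u v).edgeSet.ncard = F.edgeSet.ncard + 1 := by
      rw [edgeSet_sup, edge_edgeSet_of_ne hne, Set.union_singleton]
      exact Set.ncard_insert_of_notMem (fun hmem' => hnr (Adj.reachable hmem'))
        (Set.toFinite _)
    have : (F ⊔ edge u v).edgeSet.ncard ≤ F.edgeSet.ncard :=
      hFmax hmem (by show F.edgeSet.ncard ≤ (F ⊔ edge u v).edgeSet.ncard; omega)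
    omega
  refine ⟨F, hF0, hFH, hFac, fun u v => ⟨fun h => h.mono hFH, fun h => ?_⟩⟩
  obtain ⟨p⟩ := h
  induction p with
  | nil => exact Reachable.refl _
  | cons hstep _ ih => exact (hadj _ _ hstep).trans ih

section leSubLemmas

variable {w : Sym2 V → ℝ} {G F : SimpleGraph V} {t t' : ℝ} {u v : V}

lemma leSub_adj : (leSub w G t).Adj u v ↔ G.Adj u v ∧ w s(u, v) ≤ t := by
  rw [leSub, fromEdgeSet_adj]
  exact ⟨fun ⟨⟨h1, h2⟩, _⟩ => ⟨h1, h2⟩, fun ⟨h1, h2⟩ => ⟨⟨h1, h2⟩, h1.ne⟩⟩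

lemma leSub_le : leSub w G t ≤ G := fun _ _ h => ((leSub_adj).1 h).1

lemma leSub_mono_graph (h : F ≤ G) : leSub w F t ≤ leSub w G t := fun a b hab => by
  rw [leSub_adj] at hab ⊢; exact ⟨h hab.1, hab.2⟩

lemma leSub_mono (h : t ≤ t') : leSub w G t ≤ leSub w G t' := fun a b hab => by
  rw [leSub_adj] at hab ⊢; exact ⟨hab.1, hab.2.trans h⟩

lemma leSub_eq_self (h : ∀ u v : V, G.Adj u v → w s(u, v) ≤ t) : leSub w G t = G := by
  ext a b
  rw [leSub_adj]
  exact ⟨fun h1 => h1.1, fun h1 => ⟨h1, h _ _ h1⟩⟩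

lemma leSub_edgeSet : (leSub w G t).edgeSet = {e ∈ G.edgeSet | w e ≤ t} := by
  rw [leSub, edgeSet_fromEdgeSet]
  ext e
  simp only [Set.mem_diff, Set.mem_setOf_eq]
  exact ⟨fun h => h.1, fun h => ⟨h, fun hd => G.not_isDiag_of_mem_edgeSet h.1 hd⟩⟩

end leSubLemmas

/-- Weight of a subgraph, by weight classes. -/
lemma weight_formula [Fintype V] {w : Sym2 V → ℝ} {F G : SimpleGraph V} {t : ℕ → ℝ} {l : ℕ}
    (hFG : F ≤ G) (hw : ∀ e ∈ G.edgeSet, ∃ i : ℕ, i ≤ l ∧ w e = t i) (hts : StrictMono t) :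
    totalWeight w F = ((leSub w F (t 0)).edgeSet.ncard : ℝ) * t 0 +
      ∑ i ∈ Finset.Icc 1 l, (((leSub w F (t i)).edgeSet.ncard : ℝ) -
        ((leSub w F (t (i - 1))).edgeSet.ncard : ℝ)) * t i := by
  classical
  set EF := (Set.toFinite F.edgeSet).toFinset with hEF
  have hEFmem : ∀ e, e ∈ EF ↔ e ∈ F.edgeSet := fun e => Set.Finite.mem_toFinset _
  -- the class of an edge
  set cls : Sym2 V → ℕ := fun e =>
    if h : ∃ i : ℕ, i ≤ l ∧ w e = t i then h.choose else 0 with hcls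
  have hcls_spec : ∀ e ∈ F.edgeSet, cls e ≤ l ∧ w e = t (cls e) := by
    intro e he
    have heG : e ∈ G.edgeSet := edgeSet_mono hFG he
    have h : ∃ i : ℕ, i ≤ l ∧ w e = t i := hw e heG
    simp only [hcls, dif_pos h]
    exact ⟨h.choose_spec.1, h.choose_spec.2⟩
  -- totalWeight as a Finset sum
  have h1 : totalWeight w F = ∑ e ∈ EF, w e := by
    rw [totalWeight, ← Set.Finite.coe_toFinset (Set.toFinite F.edgeSet),
      finsum_mem_coe_finset]
  -- fiberwise sum
  have h2 : ∑ e ∈ EF, w e =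
      ∑ i ∈ Finset.range (l + 1), ∑ e ∈ EF.filter (fun e => cls e = i), w e :=
    (Finset.sum_fiberwise_of_maps_to (fun e he => Finset.mem_range.2
      (Nat.lt_succ_of_le (hcls_spec e ((hEFmem e).1 he)).1)) w).symm
  -- each fiber sum is constant
  have h3 : ∀ i, ∑ e ∈ EF.filter (fun e => cls e = i), w e =
      ((EF.filter (fun e => cls e = i)).card : ℝ) * t i := by
    intro i
    rw [Finset.sum_congr rfl (fun e he => ?_), Finset.sum_const, nsmul_eq_mul]
    obtain ⟨he1, he2⟩ := Finset.mem_filter.1 he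
    rw [(hcls_spec e ((hEFmem e).1 he1)).2, he2]
  -- cardinality of the ≤ t i slice
  have h4 : ∀ i, (leSub w F (t i)).edgeSet.ncard = (EF.filter (fun e => w e ≤ t i)).card := by
    intro i
    rw [Set.ncard_eq_toFinset_card _ (Set.toFinite _)]
    congr 1
    ext e
    simp only [Set.Finite.mem_toFinset, Finset.mem_filter, leSub_edgeSet, Set.mem_setOf_eq,
      hEFmem]
  -- class membership vs weight comparisons
  have hkey : ∀ e ∈ F.edgeSet, ∀ i, i ≤ l → (w e ≤ t i ↔ cls e ≤ i) := by
    intro e he i _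
    obtain ⟨h5, h6⟩ := hcls_spec e he
    rw [h6]
    exact ⟨fun h => (hts.le_iff_le).1 h, fun h => hts.monotone h⟩
  -- n_0 = c_0
  have h5 : EF.filter (fun e => cls e = 0) = EF.filter (fun e => w e ≤ t 0) := by
    ext e
    simp only [Finset.mem_filter, and_congr_right_iff]
    intro he
    rw [hkey e ((hEFmem e).1 he) 0 (Nat.zero_le _), Nat.le_zero]
  -- n_i as difference for 1 ≤ i
  have h6 : ∀ i, 1 ≤ i → i ≤ l → EF.filter (fun e => cls e = i) =
      EF.filter (fun e => w e ≤ t i) \ EF.filter (fun e => w e ≤ t (i - 1)) := by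
    intro i hi1 hil
    ext e
    simp only [Finset.mem_sdiff, Finset.mem_filter, not_and]
    constructor
    · rintro ⟨he, hce⟩
      have hk := hkey e ((hEFmem e).1 he)
      refine ⟨⟨he, (hk i hil).2 (le_of_eq hce)⟩, fun _ h => ?_⟩
      rw [hk (i - 1) (by omega)] at h
      omega
    · rintro ⟨⟨he, hle⟩, hnot⟩
      have hk := hkey e ((hEFmem e).1 he)
      have := (hk i hil).1 hle
      have h2 : ¬ cls e ≤ i - 1 := fun h => hnot he ((hk (i - 1) (by omega)).2 h)
      refine ⟨he, by omega⟩
  rw [h1, h2, Finset.sum_congr rfl (fun i _ => h3 i)]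
  have hins : Finset.range (l + 1) = insert 0 (Finset.Icc 1 l) := by
    ext i
    simp only [Finset.mem_range, Finset.mem_insert, Finset.mem_Icc]
    omega
  rw [hins, Finset.sum_insert (by simp)]
  congr 1
  · rw [h5, h4]
  · refine Finset.sum_congr rfl (fun i hi => ?_)
    obtain ⟨hi1, hil⟩ := Finset.mem_Icc.1 hi
    have hsub : EF.filter (fun e => w e ≤ t (i - 1)) ⊆ EF.filter (fun e => w e ≤ t i) :=
      Finset.monotone_filter_right _ (fun e _ he => le_trans he (hts.monotone (by omega)))
    rw [h6 i hi1 hil, Finset.card_sdiff_of_subset hsub, Nat.cast_sub (Finset.card_le_card hsub),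
      h4 i, h4 (i - 1)]

/-- Abel-type rewriting of the class-size formula. -/
lemma psi_eq (t c : ℕ → ℝ) : ∀ L : ℕ,
    c 0 * t 0 + ∑ i ∈ Finset.Icc 1 L, (c i - c (i - 1)) * t i =
      c L * t L - ∑ i ∈ Finset.range L, c i * (t (i + 1) - t i) := by
  intro L
  induction L with
  | zero => simp
  | succ L ih =>
    have hins : Finset.Icc 1 (L + 1) = insert (L + 1) (Finset.Icc 1 L) := by
      ext i
      simp only [Finset.mem_Icc, Finset.mem_insert]
      omega
    rw [hins, Finset.sum_insert (by simp), Finset.sum_range_succ]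
    have h1 : c (L + 1 - 1) = c L := by norm_num
    rw [h1]
    linear_combination ih

/-- Kruskal-type chain: a spanning forest whose slices are spanning forests of the slices. -/
lemma kruskal_chain [Fintype V] (w : Sym2 V → ℝ) (G : SimpleGraph V) (t : ℕ → ℝ)
    (ht : Monotone t) : ∀ k : ℕ, ∃ Fk : SimpleGraph V,
      IsSpanningForest (leSub w G (t k)) Fk ∧
        ∀ i ≤ k, ∀ u v : V,
          (leSub w Fk (t i)).Reachable u v ↔ (leSub w G (t i)).Reachable u v := by
  intro k
  induction k with
  | zero =>
    obtain ⟨F0, -, hsf⟩ := exists_spanning_forest_ge (bot_le (a := leSub w G (t 0))) isAcyclic_bot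
    have heq : leSub w F0 (t 0) = F0 :=
      leSub_eq_self (fun u v h => (leSub_adj.1 (hsf.1 h)).2)
    exact ⟨F0, hsf, fun i hi u v => by rw [Nat.le_zero.1 hi, heq]; exact hsf.2.2 u v⟩
  | succ k ih =>
    obtain ⟨Fk, hsfk, hsl⟩ := ih
    have hFkle : Fk ≤ leSub w G (t (k + 1)) :=
      hsfk.1.trans (leSub_mono (ht (Nat.le_succ k)))
    obtain ⟨F', hge, hsf'⟩ := exists_spanning_forest_ge hFkle hsfk.2.1
    refine ⟨F', hsf', fun i hi u v => ?_⟩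
    rcases Nat.lt_or_ge i (k + 1) with hik | hik
    · have hik' : i ≤ k := by omega
      have hAB : leSub w Fk (t i) ≤ leSub w F' (t i) := leSub_mono_graph hge
      have hBC : leSub w F' (t i) ≤ leSub w G (t i) :=
        leSub_mono_graph (hsf'.1.trans leSub_le)
      exact ⟨fun h => h.mono hBC, fun h => ((hsl i hik' u v).2 h).mono hAB⟩
    · have : i = k + 1 := by omega
      subst this
      have heq : leSub w F' (t (k + 1)) = F' :=
        leSub_eq_self (fun a b h => (leSub_adj.1 (hsf'.1 h)).2)
      rw [heq]
      exact hsf'.2.2 u v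

end AuxLemmas

theorem msf_weight_from_class_sizes {V : Type*} [Fintype V] (ε : ℝ) (hε : 0 < ε) (l : ℕ)
    (G : SimpleGraph V) (w : Sym2 V → ℝ)
    (hw : ∀ e ∈ G.edgeSet, ∃ i : ℕ, i ≤ l ∧ w e = (1 + ε) ^ i)
    (a : ℕ → ℕ)
    (ha : ∀ i : ℕ,
      a i = Fintype.card V - Nat.card (leSub w G ((1 + ε) ^ i)).ConnectedComponent)
    (F : SimpleGraph V) (hF : IsMSF w G F) :
    totalWeight w F =
      (a 0 : ℝ) + ∑ i ∈ Finset.Icc 1 l, ((a i : ℝ) - (a (i - 1) : ℝ)) * (1 + ε) ^ i := by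
  
  classical
  set t : ℕ → ℝ := fun i => (1 + ε) ^ i with htdef
  have h1ε : 1 < 1 + ε := by linarith
  have hts : StrictMono t := fun i j h => pow_lt_pow_right₀ h1ε h
  have htm : Monotone t := hts.monotone
  obtain ⟨⟨hFle, hFac, hFreach⟩, hFmin⟩ := hF
  have hGeq : leSub w G (t l) = G := by
    refine leSub_eq_self (fun u v h => ?_)
    obtain ⟨i, hil, hwe⟩ := hw s(u, v) h
    rw [hwe]
    exact htm hil
  have hcardV : Nat.card V = Fintype.card V := Nat.card_eq_fintype_card
  -- b values for F
  set b : ℕ → ℕ := fun i => (leSub w F (t i)).edgeSet.ncard with hbdef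
  have hbcc : ∀ i, b i + Nat.card (leSub w F (t i)).ConnectedComponent = Fintype.card V :=
    fun i => forest_card (IsAcyclic.mono' leSub_le hFac)
  have hccGF : ∀ i, Nat.card (leSub w G (t i)).ConnectedComponent ≤
      Nat.card (leSub w F (t i)).ConnectedComponent :=
    fun i => card_cc_le_of_le (leSub_mono_graph hFle)
  have hble : ∀ i, b i ≤ a i := by
    intro i
    have h1 := hbcc i
    have h2 := hccGF i
    have h3 : a i = Fintype.card V - Nat.card (leSub w G (t i)).ConnectedComponent := ha i
    omega
  have hFeq : leSub w F (t l) = F := by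
    refine leSub_eq_self (fun u v h => ?_)
    obtain ⟨i, hil, hwe⟩ := hw s(u, v) (hFle h)
    rw [hwe]
    exact htm hil
  have hbl : b l = a l := by
    have h1 := hbcc l
    have h2 : Nat.card (leSub w F (t l)).ConnectedComponent =
        Nat.card (leSub w G (t l)).ConnectedComponent := by
      rw [hFeq, hGeq]
      exact card_cc_congr hFreach
    have h3 : a l = Fintype.card V - Nat.card (leSub w G (t l)).ConnectedComponent := ha l
    omega
  -- the Kruskal forest
  obtain ⟨Fs, hsfs, hslices⟩ := kruskal_chain w G t htm l
  rw [hGeq] at hsfs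
  set bs : ℕ → ℕ := fun i => (leSub w Fs (t i)).edgeSet.ncard with hbsdef
  have hbsa : ∀ i, i ≤ l → bs i = a i := by
    intro i hi
    have h1 : bs i + Nat.card (leSub w Fs (t i)).ConnectedComponent = Fintype.card V :=
      forest_card (IsAcyclic.mono' leSub_le hsfs.2.1)
    have h2 : Nat.card (leSub w Fs (t i)).ConnectedComponent =
        Nat.card (leSub w G (t i)).ConnectedComponent :=
      card_cc_congr (hslices i hi)
    have h3 : a i = Fintype.card V - Nat.card (leSub w G (t i)).ConnectedComponent := ha i
    have h4 : Nat.card (leSub w G (t i)).ConnectedComponent ≤ Fintype.card V := by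
      rw [← hcardV]
      exact card_cc_le_card _
    omega
  -- weight formulas
  have hwF : totalWeight w F = ((b 0 : ℝ)) * t 0 +
      ∑ i ∈ Finset.Icc 1 l, ((b i : ℝ) - (b (i - 1) : ℝ)) * t i :=
    weight_formula hFle hw hts
  have hwFs : totalWeight w Fs = ((bs 0 : ℝ)) * t 0 +
      ∑ i ∈ Finset.Icc 1 l, ((bs i : ℝ) - (bs (i - 1) : ℝ)) * t i :=
    weight_formula hsfs.1 hw hts
  set Pa : ℝ := ((a 0 : ℝ)) * t 0 +
      ∑ i ∈ Finset.Icc 1 l, ((a i : ℝ) - (a (i - 1) : ℝ)) * t i with hPa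
  have hFs_eq : totalWeight w Fs = Pa := by
    rw [hwFs, hPa]
    congr 1
    · rw [hbsa 0 (Nat.zero_le _)]
    · refine Finset.sum_congr rfl (fun i hi => ?_)
      obtain ⟨hi1, hil⟩ := Finset.mem_Icc.1 hi
      rw [hbsa i hil, hbsa (i - 1) (by omega)]
  -- comparison Pa ≤ weight F
  have hcomp : Pa ≤ totalWeight w F := by
    rw [hwF, hPa, psi_eq t (fun i => (a i : ℝ)) l, psi_eq t (fun i => (b i : ℝ)) l]
    have hblcast : ((b l : ℝ)) = (a l : ℝ) := by exact_mod_cast hbl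
    rw [hblcast]
    refine sub_le_sub_left (Finset.sum_le_sum (fun i _ => ?_)) _
    refine mul_le_mul_of_nonneg_right ?_ (sub_nonneg.2 (htm (Nat.le_succ i)))
    exact_mod_cast hble i
  have hle : totalWeight w F ≤ Pa := (hFmin Fs hsfs).trans (le_of_eq hFs_eq)
  have hmain : totalWeight w F = Pa := le_antisymm hle hcomp
  rw [hmain, hPa, htdef]
  norm_num
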